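/- arXiv:2302.01191 — 2 statements merged into one kernel-verified Lean document; each statement's English description precedes it below -/
import Mathlib

section
/- Let A ⊂ ℂ^{d×d} be the set of circulant matrices. For x ∈ A^N, let x̂^j ∈ ℂ^N denote the vector of j-th eigenvalues, (x̂^j)_k = λ(x_k)_j. Let H ≥ 1, W_i ∈ A^{N_i × N_{i−1}} for i = 1, …, H, and let σ_i : A^{N_i} → A^{N_i} satisfy σ_i(x)^̂j = σ̂_i(x̂^j) for some σ̂_i : ℂ^{N_i} → ℂ^{N_i} and all j. Then the network f = σ_H ∘ W_H ∘ ⋯ ∘ σ_1 ∘ W_1 decomposes into d Fourier-component sub-networks: for every x ∈ A^{N_0} and every j with 0 ≤ j ≤ d−1, the j-th eigenvalue vector of f(x) equals σ̂_H(Ŵ_H^j( ⋯ σ̂_1(Ŵ_1^j x̂^j) ⋯ )), where Ŵ_i^j ∈ ℂ^{N_i×N_{i−1}} has (k,l)-entry λ((W_i)_{kl})_j. -/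
open Matrix

/-- The C*-algebra network `f = σ_H ∘ W_H ∘ ⋯ ∘ σ_1 ∘ W_1` (without biases):
`netFwd N W σ x i` is the output after `i` layers, where each linear layer acts by
`(W_i y)_k = Σ_l (W_i)_{kl} y_l`. -/
noncomputable def netFwd {R : Type} [NonUnitalNonAssocSemiring R] (N : ℕ → ℕ)
    (W : ∀ i : ℕ, Fin (N (i + 1)) → Fin (N i) → R)
    (σ : ∀ i : ℕ, (Fin (N (i + 1)) → R) → (Fin (N (i + 1)) → R))
    (x : Fin (N 0) → R) : (i : ℕ) → Fin (N i) → R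
  | 0 => x
  | (i + 1) => σ i fun k => ∑ l, W i k l * netFwd N W σ x i l

/-- A matrix `a ∈ ℂ^{d×d}` is circulant if there exists `c ∈ ℂ^d` such that
`a j k = c ((j−k) mod d)` (here `j - k` is subtraction in `Fin d`, i.e. mod d). -/
def IsCirculant {d : ℕ} (a : Matrix (Fin d) (Fin d) ℂ) : Prop :=
  ∃ c : Fin d → ℂ, a = Matrix.circulant c

/-- The eigenvalue vector of a circulant matrix `a`, computed from its first
column `c i = a i 0`: `λ(a)_k = Σ_{i=0}^{d−1} c_i ω^{ik}` where ω = exp(2πi/d). -/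
noncomputable def eigMap (d : ℕ) [NeZero d] (a : Matrix (Fin d) (Fin d) ℂ) :
    Fin d → ℂ :=
  fun k => ∑ i : Fin d,
    a i 0 * Complex.exp (2 * (Real.pi : ℂ) * Complex.I / (d : ℂ)) ^ (i.val * k.val)


section helpers
variable {d : ℕ} [NeZero d]

set_option linter.unusedSectionVars false

lemma IsCirculant.mul {a b : Matrix (Fin d) (Fin d) ℂ} (ha : IsCirculant a)
    (hb : IsCirculant b) : IsCirculant (a * b) := by
  obtain ⟨c, rfl⟩ := ha; obtain ⟨c', rfl⟩ := hb
  exact ⟨_, Matrix.Fin.circulant_mul c c'⟩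

lemma IsCirculant.sum {ι : Type} (s : Finset ι) (f : ι → Matrix (Fin d) (Fin d) ℂ)
    (hf : ∀ l ∈ s, IsCirculant (f l)) : IsCirculant (∑ l ∈ s, f l) := by
  classical
  induction s using Finset.induction with
  | empty => exact ⟨0, by ext i k; simp⟩
  | @insert a s h ih =>
    rw [Finset.sum_insert h]
    obtain ⟨c, hc⟩ := hf a (Finset.mem_insert_self a s)
    obtain ⟨c', hc'⟩ := ih fun l hl => hf l (Finset.mem_insert_of_mem hl)
    exact ⟨c + c', by rw [hc, hc', Matrix.circulant_add]⟩

lemma eigMap_sum {ι : Type} (s : Finset ι) (f : ι → Matrix (Fin d) (Fin d) ℂ) (j : Fin d) :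
    eigMap d (∑ l ∈ s, f l) j = ∑ l ∈ s, eigMap d (f l) j := by
  simp only [eigMap, Matrix.sum_apply, Finset.sum_mul]
  exact Finset.sum_comm

lemma eigMap_mul {a b : Matrix (Fin d) (Fin d) ℂ} (ha : IsCirculant a)
    (hb : IsCirculant b) (j : Fin d) :
    eigMap d (a * b) j = eigMap d a j * eigMap d b j := by
  obtain ⟨c, rfl⟩ := ha; obtain ⟨c', rfl⟩ := hb
  set ω : ℂ := Complex.exp (2 * (Real.pi : ℂ) * Complex.I / (d : ℂ)) with hωdef
  have hd : (d : ℂ) ≠ 0 := Nat.cast_ne_zero.mpr (NeZero.ne d)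
  have hω : ω ^ d = 1 := by
    rw [hωdef, ← Complex.exp_nat_mul, mul_div_cancel₀ _ hd, Complex.exp_two_pi_mul_I]
  have key : ∀ n : ℕ, ω ^ n = ω ^ (n % d) := fun n => pow_eq_pow_mod n hω
  simp only [eigMap, Matrix.mul_apply, Matrix.circulant_apply]
  rw [Finset.sum_mul_sum]
  simp only [Finset.sum_mul]
  conv_lhs => rw [Finset.sum_comm]
  conv_rhs => rw [Finset.sum_comm]
  refine Finset.sum_congr rfl fun m _ => ?_
  rw [← Equiv.sum_comp (Equiv.addRight m)]
  refine Finset.sum_congr rfl fun t _ => ?_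
  simp only [Equiv.coe_addRight, add_sub_cancel_right, sub_zero]
  have h2 : ω ^ ((t + m : Fin d).val * j.val) = ω ^ (t.val * j.val) * ω ^ (m.val * j.val) := by
    rw [key, Fin.val_add, Nat.mod_mul_mod, ← key, ← pow_add, ← add_mul]
  rw [h2]; ring

end helpers

/-- Over the algebra `A` of circulant matrices in ℂ^{d×d}, a C*-algebra network
with circulant weights and activations acting Fourier-componentwise
(`λ(σ_i(x))^j = σ̂_i(x̂^j)`) decomposes into `d` Fourier-component sub-networks:
the j-th eigenvalue vector of `f(x)` equals
`σ̂_H(Ŵ_H^j(⋯ σ̂_1(Ŵ_1^j x̂^j) ⋯))`, where `(Ŵ_i^j)_{kl} = λ((W_i)_{kl})_j`. -/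
theorem circulant_cstar_net_decomposition (d : ℕ) [NeZero d] (H : ℕ) (hH : 1 ≤ H)
    (N : ℕ → ℕ)
    (W : ∀ i : ℕ, Fin (N (i + 1)) → Fin (N i) → Matrix (Fin d) (Fin d) ℂ)
    (σ : ∀ i : ℕ, (Fin (N (i + 1)) → Matrix (Fin d) (Fin d) ℂ) →
      (Fin (N (i + 1)) → Matrix (Fin d) (Fin d) ℂ))
    (σh : ∀ i : ℕ, (Fin (N (i + 1)) → ℂ) → (Fin (N (i + 1)) → ℂ))
    (hW : ∀ i k l, IsCirculant (W i k l))
    (hσcirc : ∀ i (y : Fin (N (i + 1)) → Matrix (Fin d) (Fin d) ℂ),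
      (∀ k, IsCirculant (y k)) → ∀ k, IsCirculant (σ i y k))
    (hσ : ∀ i (y : Fin (N (i + 1)) → Matrix (Fin d) (Fin d) ℂ),
      (∀ k, IsCirculant (y k)) → ∀ j : Fin d,
        (fun k => eigMap d (σ i y k) j) = σh i (fun k => eigMap d (y k) j))
    (x : Fin (N 0) → Matrix (Fin d) (Fin d) ℂ) (hx : ∀ k, IsCirculant (x k))
    (j : Fin d) :
    (fun k => eigMap d (netFwd N W σ x H k) j) =
      netFwd N (fun i k l => eigMap d (W i k l) j) σh
        (fun k => eigMap d (x k) j) H := by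
  suffices h : ∀ i, (∀ k, IsCirculant (netFwd N W σ x i k)) ∧
      (fun k => eigMap d (netFwd N W σ x i k) j) =
        netFwd N (fun i k l => eigMap d (W i k l) j) σh (fun k => eigMap d (x k) j) i from
    (h H).2
  intro i
  induction i with
  | zero => exact ⟨hx, rfl⟩
  | succ i ih =>
    obtain ⟨ihc, ihe⟩ := ih
    have hcirc : ∀ k, IsCirculant (∑ l, W i k l * netFwd N W σ x i l) := fun k =>
      IsCirculant.sum _ _ fun l _ => (hW i k l).mul (ihc l)
    refine ⟨fun k => hσcirc i _ hcirc k, ?_⟩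
    have harg : (fun k => eigMap d (∑ l, W i k l * netFwd N W σ x i l) j)
        = fun k => ∑ l, eigMap d (W i k l) j *
            netFwd N (fun i k l => eigMap d (W i k l) j) σh (fun k => eigMap d (x k) j) i l := by
      funext k
      rw [eigMap_sum]
      refine Finset.sum_congr rfl fun l _ => ?_
      rw [eigMap_mul (hW i k l) (ihc l) j]
      exact congrArg _ (congrFun ihe l)
    show (fun k => eigMap d (σ i _ k) j) = σh i _
    rw [hσ i _ hcirc j]
    exact congrArg (σh i) harg
end

section
/- Let d, N_0, N_1 ≥ 1, σ : ℝ → ℝ, and suppose given real vectors w_{ij} ∈ ℝ^{N_0 d}, real scalars b_{ij} ∈ ℝ, and real scalars t_{ikj} ∈ ℝ for 1 ≤ i ≤ N_1 and 1 ≤ j, k ≤ d. Define W_2 ∈ (ℂ^{d×d})^{N_1} by ((W_2)_i)_{jk} = t_{ikj}, define W_1 ∈ (ℂ^{d×d})^{N_1×N_0} by ((W_1)_{im})_{jl} = (w_{ij})_{md+l}, and define b ∈ (ℂ^{d×d})^{N_1} by (b_i)_{jl} = b_{ij}. Then the shallow C*-algebra network f(x) = W_2^* σ(W_1 x + b) =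 Σ_i ((W_2)_i)^* σ((W_1 x)_i + b_i), with σ applied entrywise to each matrix, satisfies for every x ∈ (ℂ^{d×d})^{N_0} and all k, l: f(x)_{kl} = Σ_{j=1}^{d} Σ_{i=1}^{N_1} t_{ikj} σ(w_{ij}^⊤ x^l + b_{ij}), where x^l ∈ ℂ^{N_0 d} is the l-th column of x regarded as an N_0 d × d matrix (obtained by stacking the matrices x_1, …, x_{N_0}). -/
open Matrix

/-- The index `m*d + l` of the l-th column entry of the m-th matrix when a vector
in `(ℂ^{d×d})^{N0}` is regarded as an `N0 d × d` matrix by vertical stacking. -/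
def stackIdx {N0 d : ℕ} (m : Fin N0) (p : Fin d) : Fin (N0 * d) :=
  ⟨m.val * d + p.val, by
    have hm : m.val + 1 ≤ N0 := m.isLt
    have hp : p.val < d := p.isLt
    calc m.val * d + p.val < m.val * d + d := by omega
      _ = (m.val + 1) * d := by ring
      _ ≤ N0 * d := Nat.mul_le_mul_right d hm⟩

/-- The entrywise action on ℂ (identified with ℝ²) of an activation σ : ℝ → ℝ. -/
noncomputable def cExt (σ : ℝ → ℝ) (z : ℂ) : ℂ :=
  (σ z.re : ℂ) + (σ z.im : ℂ) * Complex.I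

/-- The shallow C*-algebra network `f(x) = W_2^* σ(W_1 x + b)` over `A = ℂ^{d×d}`,
with `((W_2)_i)_{jk} = t_{ikj}`, `((W_1)_{im})_{jl} = (w_{ij})_{md+l}`,
`(b_i)_{jl} = b_{ij}`, and σ applied entrywise, satisfies
`f(x)_{kl} = Σ_{j=1}^{d} Σ_{i=1}^{N_1} t_{ikj} σ(w_{ij}^⊤ x^l + b_{ij})`,
where `x^l ∈ ℂ^{N_0 d}` is the l-th column of `x` regarded as an `N_0 d × d`
matrix. -/
theorem shallow_cstar_net_representation (d N0 N1 : ℕ)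
    (hd : 1 ≤ d) (hN0 : 1 ≤ N0) (hN1 : 1 ≤ N1) (σ : ℝ → ℝ)
    (w : Fin N1 → Fin d → (Fin (N0 * d) → ℝ))
    (b : Fin N1 → Fin d → ℝ)
    (t : Fin N1 → Fin d → Fin d → ℝ)
    (x : Fin N0 → Matrix (Fin d) (Fin d) ℂ) (k l : Fin d) :
    (∑ i : Fin N1,
        (Matrix.of fun j k' => (t i k' j : ℂ))ᴴ *
          (Matrix.of fun p q =>
            cExt σ
              ((((∑ m : Fin N0,
                  (Matrix.of fun j' l' => (w i j' (stackIdx m l') : ℂ)) * x m) +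
                Matrix.of fun j' _ => (b i j' : ℂ) :
                Matrix (Fin d) (Fin d) ℂ) p q)))) k l =
      ∑ j : Fin d, ∑ i : Fin N1,
        (t i k j : ℂ) *
          cExt σ
            ((∑ m : Fin N0, ∑ p : Fin d, (w i j (stackIdx m p) : ℂ) * x m p l) +
              (b i j : ℂ)) := by
  rw [Finset.sum_comm]
  simp only [Matrix.sum_apply, Matrix.mul_apply, Matrix.conjTranspose_apply,
    Matrix.add_apply, Matrix.of_apply, Complex.star_def, Complex.conj_ofReal]
end
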